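/- Let f be a φ_{h,m}-convex function on [0,b] with m ∈ (0,1], and let x, y ∈ [0,b] be such that φ(x) < mφ(y). Assume that h is Lebesgue integrable on (0,1) and that f is Lebesgue integrable on [φ(x), mφ(y)]. Then (1/(mφ(y) − φ(x))) ∫_{φ(x)}^{mφ(y)} f(u) du ≤ [f(φ(x)) + f(φ(y))]·∫₀¹ h(t) dt. -/

import Mathlib

open MeasureTheory Set intervalIntegral

/-- A nonnegative function `f` on `[0,b]` is `φ_{h,m}`-convex if
`f (t·φ(x) + m·(1−t)·φ(y)) ≤ h(t)·f(φ(x)) + m·h(1−t)·f(φ(y))`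
for all `x, y ∈ [0,b]` and `t ∈ (0,1)`. -/
def PhiHMConvex (b m : ℝ) (h φ f : ℝ → ℝ) : Prop :=
  (∀ x ∈ Set.Icc (0 : ℝ) b, 0 ≤ f x) ∧
  ∀ x ∈ Set.Icc (0 : ℝ) b, ∀ y ∈ Set.Icc (0 : ℝ) b, ∀ t ∈ Set.Ioo (0 : ℝ) 1,
    f (t * φ x + m * (1 - t) * φ y) ≤ h t * f (φ x) + m * h (1 - t) * f (φ y)

theorem phiHMConvex_hadamard_right (b m : ℝ) (h φ f : ℝ → ℝ)
    (hb : 0 < b) (hm : m ∈ Set.Ioc (0 : ℝ) 1)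
    (hh : ∀ t ∈ Set.Ioo (0 : ℝ) 1, 0 ≤ h t) (hh0 : h ≠ 0)
    (hφ : ∀ x ∈ Set.Icc (0 : ℝ) b, φ x ∈ Set.Icc (0 : ℝ) b)
    (hf : PhiHMConvex b m h φ f)
    (x : ℝ) (hx : x ∈ Set.Icc (0 : ℝ) b) (y : ℝ) (hy : y ∈ Set.Icc (0 : ℝ) b)
    (hxy : φ x < m * φ y)
    (hinth : IntervalIntegrable h volume 0 1)
    (hintf : IntervalIntegrable f volume (φ x) (m * φ y)) :
    (1 / (m * φ y - φ x)) * ∫ u in (φ x)..(m * φ y), f u ≤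
      (f (φ x) + f (φ y)) * ∫ t in (0 : ℝ)..1, h t := by
  set c : ℝ := φ x - m * φ y with hc
  set d : ℝ := m * φ y with hd
  have hcne : c ≠ 0 := by
    have : c < 0 := by simp [hc]; linarith
    exact ne_of_lt this
  -- integrability of g t = f (c * t + d) on [0,1]
  have hg1 : IntervalIntegrable (fun t => f (t + d)) volume (φ x - d) (d - d) :=
    hintf.comp_add_right d
  have hg2 : IntervalIntegrable (fun t => f (c * t + d)) volume ((φ x - d) / c) ((d - d) / c) := by
    have := hg1.comp_mul_left (c := c)
    simpa using this
  have hg : IntervalIntegrable (fun t => f (c * t + d)) volume 0 1 := by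
    have h1 : (φ x - d) / c = 1 := by rw [div_eq_one_iff_eq hcne]
    have h2 : (d - d) / c = 0 := by simp
    rw [h1, h2] at hg2
    exact hg2.symm
  -- integrability of H
  have hh1 : IntervalIntegrable (fun t => h (1 - t)) volume 0 1 := by
    have := hinth.comp_sub_left 1
    simpa using this.symm
  have hH : IntervalIntegrable
      (fun t => f (φ x) * h t + f (φ y) * h (1 - t)) volume 0 1 :=
    (hinth.const_mul _).add (hh1.const_mul _)
  -- nonnegativity
  have hφx := hφ x hx
  have hφy := hφ y hy
  have hfx : 0 ≤ f (φ x) := hf.1 _ hφx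
  have hfy : 0 ≤ f (φ y) := hf.1 _ hφy
  -- a.e. pointwise inequality on [0,1]
  have hae : (fun t => f (c * t + d)) ≤ᵐ[volume.restrict (Icc (0:ℝ) 1)]
      fun t => f (φ x) * h t + f (φ y) * h (1 - t) := by
    have h0 : ∀ᵐ t ∂(volume.restrict (Icc (0:ℝ) 1)), t ∈ Icc (0:ℝ) 1 :=
      ae_restrict_mem measurableSet_Icc
    have h1 : ∀ᵐ t : ℝ ∂volume, t ≠ 0 ∧ t ≠ 1 := by
      have e0 : ∀ᵐ t : ℝ ∂volume, t ≠ 0 := by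
        rw [ae_iff]; simpa using measure_singleton (0 : ℝ)
      have e1 : ∀ᵐ t : ℝ ∂volume, t ≠ 1 := by
        rw [ae_iff]; simpa using measure_singleton (1 : ℝ)
      exact e0.and e1
    have h1' : ∀ᵐ t ∂(volume.restrict (Icc (0:ℝ) 1)), t ≠ 0 ∧ t ≠ 1 :=
      h1.filter_mono (ae_mono Measure.restrict_le_self)
    filter_upwards [h0, h1'] with t ht hne
    have htI : t ∈ Ioo (0:ℝ) 1 :=
      ⟨lt_of_le_of_ne ht.1 (Ne.symm hne.1), lt_of_le_of_ne ht.2 hne.2⟩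
    have key := hf.2 x hx y hy t htI
    have harg : c * t + d = t * φ x + m * (1 - t) * φ y := by
      simp only [hc, hd]; ring
    rw [harg]
    have hht : 0 ≤ h (1 - t) := hh _ ⟨by linarith [htI.2], by linarith [htI.1]⟩
    calc f (t * φ x + m * (1 - t) * φ y)
        ≤ h t * f (φ x) + m * h (1 - t) * f (φ y) := key
      _ ≤ f (φ x) * h t + f (φ y) * h (1 - t) := by
          nlinarith [mul_nonneg hht hfy, hm.2]
  have hmono : (∫ t in (0:ℝ)..1, f (c * t + d)) ≤
      ∫ t in (0:ℝ)..1, f (φ x) * h t + f (φ y) * h (1 - t) :=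
    integral_mono_ae_restrict (by norm_num) hg hH hae
  -- compute the left integral via substitution
  have hsub : (∫ t in (0:ℝ)..1, f (c * t + d)) =
      (1 / (m * φ y - φ x)) * ∫ u in (φ x)..(m * φ y), f u := by
    rw [integral_comp_mul_add f hcne d]
    have e1 : c * 0 + d = m * φ y := by simp [hd]
    have e2 : c * 1 + d = φ x := by simp [hc, hd]
    rw [e1, e2, integral_symm, smul_eq_mul]
    have hne1 : φ x - d ≠ 0 := by simp only [hd]; linarith
    have hne2 : d - φ x ≠ 0 := by simp only [hd]; linarith
    rw [hc]
    field_simp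
    rw [hd]
    have hne3 : m * φ y - φ x ≠ 0 := sub_ne_zero.mpr (ne_of_gt hxy)
    linear_combination (∫ u in (φ x)..(m * φ y), f u) * mul_inv_cancel₀ hne3
  -- compute the right integral
  have hrsub : (∫ t in (0:ℝ)..1, f (φ x) * h t + f (φ y) * h (1 - t)) =
      (f (φ x) + f (φ y)) * ∫ t in (0:ℝ)..1, h t := by
    rw [integral_add (hinth.const_mul _) (hh1.const_mul _),
      intervalIntegral.integral_const_mul, intervalIntegral.integral_const_mul]
    have : (∫ t in (0:ℝ)..1, h (1 - t)) = ∫ t in (0:ℝ)..1, h t := by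
      have := integral_comp_sub_left h 1 (a := 0) (b := 1)
      simpa using this
    rw [this]; ring
  rw [← hsub, ← hrsub]
  exact hmono
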